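/- The number of dominant monomial ideals in K[x_1,x_2,x_3,x_4] with exactly 4 minimal generators whose lcm is x_1^{m_1} x_2^{m_2} x_3^{m_3} x_4^{m_4} is (m_1 m_2 m_3 m_4)^3. -/
import Mathlib


def DominantSet {n : ℕ} (L : Finset (Fin n → ℕ)) : Prop :=
  ∀ v ∈ L, ∃ i : Fin n, ∀ w ∈ L, w ≠ v → w i < v i

def mLcm {n : ℕ} (L : Finset (Fin n → ℕ)) : Fin n → ℕ :=
  fun i => L.sup fun g => g i

namespace CountDominantAux

def d (m : Fin 4 → ℕ) (i j : Fin 4) : ℕ := if i = j then 1 else m j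

abbrev B (m : Fin 4 → ℕ) : Type := ∀ i j : Fin 4, Fin (d m i j)

def g (m : Fin 4 → ℕ) (b : B m) (i j : Fin 4) : ℕ := if i = j then m j else (b i j : ℕ)

def Φ (m : Fin 4 → ℕ) (b : B m) : Finset (Fin 4 → ℕ) :=
  Finset.image (g m b) Finset.univ

lemma g_diag (m : Fin 4 → ℕ) (b : B m) (i : Fin 4) : g m b i i = m i := if_pos rfl

lemma g_lt (m : Fin 4 → ℕ) (b : B m) {i j : Fin 4} (h : i ≠ j) : g m b i j < m j := by
  have h1 := (b i j).isLt
  simp only [d, if_neg h] at h1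
  simpa only [g, if_neg h] using h1

lemma g_inj (m : Fin 4 → ℕ) (b : B m) : Function.Injective (g m b) := by
  intro i k h
  by_contra hne
  have h2 : g m b k i < m i := g_lt m b (Ne.symm hne)
  rw [← h, g_diag] at h2
  exact lt_irrefl _ h2

lemma Φ_inj (m : Fin 4 → ℕ) : Function.Injective (Φ m) := by
  intro b1 b2 h
  have key : ∀ i, g m b1 i = g m b2 i := by
    intro i
    have h1 : g m b1 i ∈ Φ m b2 := by
      rw [← h]; exact Finset.mem_image_of_mem _ (Finset.mem_univ i)
    obtain ⟨k, -, hk⟩ := Finset.mem_image.mp h1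
    rcases eq_or_ne k i with rfl | hki
    · exact hk.symm
    · exfalso
      have h2 : g m b2 k i < m i := g_lt m b2 hki
      rw [hk, g_diag] at h2
      exact lt_irrefl _ h2
  funext i j
  rcases eq_or_ne i j with rfl | hij
  · have a1 := (b1 i i).isLt
    have a2 := (b2 i i).isLt
    simp [d] at a1 a2
    exact Fin.ext (by omega)
  · have h3 := congrFun (key i) j
    simp only [g, if_neg hij] at h3
    exact Fin.ext h3

lemma Φ_mem (m : Fin 4 → ℕ) (b : B m) :
    (∀ u ∈ Φ m b, ∀ v ∈ Φ m b, u ≤ v → u = v) ∧ DominantSet (Φ m b) ∧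
      (Φ m b).card = 4 ∧ mLcm (Φ m b) = m := by
  refine ⟨?_, ?_, ?_, ?_⟩
  · intro u hu v hv huv
    obtain ⟨i, -, rfl⟩ := Finset.mem_image.mp hu
    obtain ⟨k, -, rfl⟩ := Finset.mem_image.mp hv
    rcases eq_or_ne i k with rfl | hik
    · rfl
    · exfalso
      have h1 : g m b i i ≤ g m b k i := huv i
      rw [g_diag] at h1
      have h2 : g m b k i < m i := g_lt m b (Ne.symm hik)
      omega
  · intro v hv
    obtain ⟨i, -, rfl⟩ := Finset.mem_image.mp hv
    refine ⟨i, ?_⟩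
    intro w hw hne
    obtain ⟨k, -, rfl⟩ := Finset.mem_image.mp hw
    have hki : k ≠ i := fun h => hne (by rw [h])
    rw [g_diag]
    exact g_lt m b hki
  · rw [Φ, Finset.card_image_of_injective _ (g_inj m b), Finset.card_univ, Fintype.card_fin]
  · funext i
    simp only [mLcm]
    apply le_antisymm
    · apply Finset.sup_le
      intro x hx
      obtain ⟨k, -, rfl⟩ := Finset.mem_image.mp hx
      rcases eq_or_ne k i with rfl | hk
      · rw [g_diag]
      · exact le_of_lt (g_lt m b hk)
    · have hmem : g m b i ∈ Φ m b := Finset.mem_image_of_mem _ (Finset.mem_univ i)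
      have h2 : g m b i i ≤ (Φ m b).sup (fun v => v i) :=
        Finset.le_sup (f := fun v => v i) hmem
      rwa [g_diag] at h2

lemma Φ_surj (m : Fin 4 → ℕ) (L : Finset (Fin 4 → ℕ))
    (hdom : DominantSet L) (hcard : L.card = 4) (hlcm : mLcm L = m) :
    ∃ b : B m, Φ m b = L := by
  classical
  have hne : L.Nonempty := Finset.card_pos.mp (by omega)
  choose ι hι using fun x : {v // v ∈ L} => hdom x.1 x.2
  have hinj : Function.Injective ι := by
    intro x y hxy
    by_contra hne'
    have h1 := hι x y.1 y.2 (fun h => hne' (Subtype.ext h.symm))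
    have h2 := hι y x.1 x.2 (fun h => hne' (Subtype.ext h))
    rw [hxy] at h1
    omega
  have hbij : Function.Bijective ι := by
    rw [Fintype.bijective_iff_injective_and_card]
    refine ⟨hinj, ?_⟩
    simp [Fintype.card_coe, hcard]
  let e : {v // v ∈ L} ≃ Fin 4 := Equiv.ofBijective ι hbij
  have he : ∀ i, ι (e.symm i) = i := fun i => e.apply_symm_apply i
  have hA : ∀ i, ∀ w ∈ L, w ≠ (e.symm i).1 → w i < (e.symm i).1 i := by
    intro i w hw hne'
    have h3 := hι (e.symm i) w hw hne'
    rwa [he i] at h3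
  have hB : ∀ i, (e.symm i).1 i = m i := by
    intro i
    have hle : (e.symm i).1 i ≤ m i := by
      rw [← hlcm]
      exact Finset.le_sup (f := fun v => v i) (e.symm i).2
    have hge : m i ≤ (e.symm i).1 i := by
      obtain ⟨u, hu, hu2⟩ := Finset.exists_mem_eq_sup L hne (fun v => v i)
      rw [← hlcm]
      show L.sup (fun v => v i) ≤ _
      rw [hu2]
      rcases eq_or_ne u (e.symm i).1 with rfl | hud
      · exact le_refl _
      · exact le_of_lt (hA i u hu hud)
    omega
  have hbound : ∀ i j : Fin 4, (if _ : i = j then 0 else (e.symm i).1 j) < d m i j := by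
    intro i j
    by_cases h : i = j
    · simp [d, h]
    · rw [dif_neg h]
      simp only [d, if_neg h]
      have hne2 : (e.symm i).1 ≠ (e.symm j).1 := fun hh =>
        h (e.symm.injective (Subtype.ext hh))
      exact lt_of_lt_of_eq (hA j _ (e.symm i).2 hne2) (hB j)
  refine ⟨fun i j => ⟨_, hbound i j⟩, ?_⟩
  have hgb : ∀ i, g m (fun i j => (⟨_, hbound i j⟩ : Fin (d m i j))) i = (e.symm i).1 := by
    intro i
    funext j
    by_cases h : i = j
    · subst h
      rw [g_diag]
      exact (hB i).symm
    · simp only [g, if_neg h]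
      exact dif_neg h
  apply Finset.ext
  intro x
  simp only [Φ, Finset.mem_image, Finset.mem_univ, true_and]
  constructor
  · rintro ⟨i, rfl⟩
    rw [hgb]
    exact (e.symm i).2
  · intro hx
    refine ⟨e ⟨x, hx⟩, ?_⟩
    rw [hgb, Equiv.symm_apply_apply]

end CountDominantAux

/-- Monomial ideals are identified with their minimal monomial generating sets (finite
antichains of exponent vectors).  The number of dominant monomial ideals in
`K[x₁,x₂,x₃,x₄]` with exactly 4 minimal generators whose lcm is
`x₁^m₁ x₂^m₂ x₃^m₃ x₄^m₄` is `(m₁ m₂ m₃ m₄)³`. -/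
theorem count_dominant_four_vars_four_gens (m : Fin 4 → ℕ) :
    Set.ncard {L : Finset (Fin 4 → ℕ) |
        (∀ u ∈ L, ∀ v ∈ L, u ≤ v → u = v) ∧ DominantSet L ∧ L.card = 4 ∧ mLcm L = m} =
      (m 0 * m 1 * m 2 * m 3) ^ 3 := by
  classical
  have hset : {L : Finset (Fin 4 → ℕ) |
      (∀ u ∈ L, ∀ v ∈ L, u ≤ v → u = v) ∧ DominantSet L ∧ L.card = 4 ∧ mLcm L = m} =
      Set.range (CountDominantAux.Φ m) := by
    ext L
    simp only [Set.mem_setOf_eq, Set.mem_range]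
    constructor
    · rintro ⟨-, hdom, hcard, hlcm⟩
      exact CountDominantAux.Φ_surj m L hdom hcard hlcm
    · rintro ⟨b, rfl⟩
      exact CountDominantAux.Φ_mem m b
  rw [hset, ← Set.image_univ, Set.ncard_image_of_injective _ (CountDominantAux.Φ_inj m),
    Set.ncard_univ, Nat.card_eq_fintype_card]
  have hcardB : Fintype.card (CountDominantAux.B m) =
      ∏ i : Fin 4, ∏ j : Fin 4, CountDominantAux.d m i j := by
    simp [Fintype.card_pi, Fintype.card_fin]
  rw [hcardB]
  simp [CountDominantAux.d, Fin.prod_univ_four]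
  ring
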